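/- Let A be a weakly associative algebra over ℂ, V a vector space, and θ : A × A → V a bilinear map satisfying the weak-associativity 2-cocycle condition θ(xy,z) - θ(x,yz) + θ(yz,x) - θ(y,zx) = θ(yx,z) - θ(y,xz) for all x,y,z. Then the product on A ⊕ V defined by (x+u)(y+v) = xy + θ(x,y) is weakly associative. Conversely, if this product on A ⊕ V is weakly associative, then θ satisfies the cocycle condition. -/
import Mathlib


/-- The product on `A ⊕ V` defined by a bilinear map `θ`. -/
def extMul {A V : Type*} [Mul A] (θ : A → A → V) (p q : A × V) : A × V :=
  (p.1 * q.1, θ p.1 q.1)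

/-- For a weakly associative complex algebra `A` and bilinear `θ : A × A → V`,
the central-extension product on `A ⊕ V` is weakly associative iff `θ` satisfies the
weak-associativity 2-cocycle condition. -/
theorem stmt_9 {A V : Type*} [NonUnitalNonAssocRing A] [Module ℂ A]
    [IsScalarTower ℂ A A] [SMulCommClass ℂ A A]
    [AddCommGroup V] [Module ℂ V]
    (θ : A →ₗ[ℂ] A →ₗ[ℂ] V)
    (hwa : ∀ x y z : A,
      (x * y) * z - x * (y * z) + (y * z) * x - y * (z * x)
        = (y * x) * z - y * (x * z)) :
    (∀ x y z : A,
        θ (x * y) z - θ x (y * z) + θ (y * z) x - θ y (z * x)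
          = θ (y * x) z - θ y (x * z)) ↔
      (∀ p q r : A × V,
        extMul (fun a b => θ a b) (extMul (fun a b => θ a b) p q) r
            - extMul (fun a b => θ a b) p (extMul (fun a b => θ a b) q r)
            + extMul (fun a b => θ a b) (extMul (fun a b => θ a b) q r) p
            - extMul (fun a b => θ a b) q (extMul (fun a b => θ a b) r p)
          = extMul (fun a b => θ a b) (extMul (fun a b => θ a b) q p) r
            - extMul (fun a b => θ a b) q (extMul (fun a b => θ a b) p r)) := by
  constructor
  · intro h p q r
    simp only [extMul, Prod.ext_iff, Prod.fst_sub, Prod.fst_add, Prod.snd_sub, Prod.snd_add]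
    exact ⟨hwa _ _ _, h _ _ _⟩
  · intro h x y z
    have := congrArg Prod.snd (h (x, 0) (y, 0) (z, 0))
    simpa only [extMul, Prod.snd_sub, Prod.snd_add] using this
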